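/- arXiv:2303.13760 — 3 statements merged into one kernel-verified Lean document; each statement's English description precedes it below -/
import Mathlib

section
/- If X and Y are independent exponential random variables with rates 1/λ_h and 1/λ_g respectively (λ_h, λ_g > 0), then the product Z = XY has probability density function f_Z(z) = (2/λ)·K₀(2√(z/λ)) for z > 0, where λ = λ_g·λ_h and K₀ is the modified Bessel function of the second kind of order 0. -/
open MeasureTheory ProbabilityTheory Real Filter Set

noncomputable def Ei (x : ℝ) : ℝ := ∫ t in Set.Iio x, Real.exp t / t
noncomputable def E1 (x : ℝ) : ℝ := ∫ t in Set.Ioi x, Real.exp (-t) / t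
noncomputable def besselK0 (x : ℝ) : ℝ := ∫ t in Set.Ici (0:ℝ), Real.exp (-(x * Real.cosh t))
noncomputable def besselK1 (x : ℝ) : ℝ :=
  ∫ t in Set.Ici (0:ℝ), Real.exp (-(x * Real.cosh t)) * Real.cosh t
noncomputable def besselI0 (x : ℝ) : ℝ :=
  ∑' m : ℕ, (x / 2) ^ (2 * m) / ((Nat.factorial m : ℝ)) ^ 2
noncomputable def E₀ : ℝ := -∫ x in Set.Ioi (0:ℝ), Real.exp (-x) * Real.log x

namespace ExpProd

noncomputable def expD (lam : ℝ) : ℝ → ENNReal :=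
  fun x => ENNReal.ofReal (if 0 ≤ x then (1 / lam) * Real.exp (-(x / lam)) else 0)

lemma expD_eq (lam : ℝ) : expD lam = exponentialPDF (1/lam) := by
  funext x
  rw [exponentialPDF_eq, expD]
  congr 1
  by_cases h : 0 ≤ x <;> simp [h, one_div, div_eq_mul_inv, mul_comm]

lemma expD_measurable (lam : ℝ) : Measurable (expD lam) := by
  rw [expD_eq]
  exact (measurable_exponentialPDFReal _).ennreal_ofReal

lemma expD_of_neg {lam x : ℝ} (hx : x < 0) : expD lam x = 0 := by
  rw [expD_eq]; exact exponentialPDF_of_neg hx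

lemma expD_of_nonneg {lam x : ℝ} (hx : 0 ≤ x) :
    expD lam x = ENNReal.ofReal ((1/lam) * Real.exp (-(x/lam))) := by
  simp [expD, hx]

instance isProb (lam : ℝ) [h : Fact (0 < lam)] :
    IsProbabilityMeasure (volume.withDensity (expD lam)) := by
  constructor
  rw [expD_eq, withDensity_apply _ MeasurableSet.univ, Measure.restrict_univ]
  exact lintegral_exponentialPDF_eq_one (by have := h.out; positivity)

/-- integrability of the Bessel integrand -/
lemma besselK0_integrable {b : ℝ} (hb : 0 < b) :
    IntegrableOn (fun t => Real.exp (-(b * Real.cosh t))) (Ici 0) := by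
  have h1 : IntegrableOn (fun t => Real.exp (-b * t)) (Ici 0) := by
    rw [integrableOn_Ici_iff_integrableOn_Ioi]
    exact exp_neg_integrableOn_Ioi 0 hb
  refine Integrable.mono h1 ?_ ?_
  · exact ((Real.continuous_exp.comp (continuous_const.mul Real.continuous_cosh).neg)).aestronglyMeasurable
  · refine (ae_restrict_iff' measurableSet_Ici).2 (ae_of_all _ fun t ht => ?_)
    simp only [Real.norm_eq_abs, abs_of_pos (Real.exp_pos _)]
    apply Real.exp_le_exp.2
    have h2 : t ≤ Real.cosh t := by
      calc t ≤ Real.sinh t := (Real.self_le_sinh_iff).2 ht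
        _ ≤ Real.cosh t := by nlinarith [Real.cosh_sub_sinh t, Real.exp_pos (-t)]
    nlinarith [Real.exp_pos t]

lemma besselK0_nonneg (b : ℝ) : 0 ≤ besselK0 b :=
  integral_nonneg fun t => (Real.exp_pos _).le

/-- symmetric lintegral over ℝ equals twice besselK0 -/
lemma lintegral_cosh {b : ℝ} (hb : 0 < b) :
    ∫⁻ t, ENNReal.ofReal (Real.exp (-(b * Real.cosh t))) = 2 * ENNReal.ofReal (besselK0 b) := by
  have hIci : ∫⁻ t in Ici (0:ℝ), ENNReal.ofReal (Real.exp (-(b * Real.cosh t)))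
      = ENNReal.ofReal (besselK0 b) := by
    rw [besselK0, ← ofReal_integral_eq_lintegral_ofReal (besselK0_integrable hb)
      (ae_of_all _ fun t => (Real.exp_pos _).le)]
  have himg : (fun t : ℝ => -t) '' (Ioi 0) = Iio 0 := by
    ext u
    constructor
    · rintro ⟨t, ht, rfl⟩
      simpa using ht
    · intro hu
      exact ⟨-u, by simpa using (mem_Iio.1 hu), by simp⟩
  have hneg : ∫⁻ t in Iio (0:ℝ), ENNReal.ofReal (Real.exp (-(b * Real.cosh t)))
      = ∫⁻ t in Ici (0:ℝ), ENNReal.ofReal (Real.exp (-(b * Real.cosh t))) := by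
    rw [← himg, lintegral_image_eq_lintegral_abs_det_fderiv_mul volume measurableSet_Ioi
      (f' := fun _ => (1 : ℝ →L[ℝ] ℝ).smulRight (-1))
      (fun t _ => (hasDerivAt_neg t).hasFDerivAt.hasFDerivWithinAt)
      (fun a _ b _ h => by simpa using h) _]
    simp only [ContinuousLinearMap.smulRight_one_eq_toSpanSingleton, ContinuousLinearMap.det_toSpanSingleton, abs_neg, abs_one, ENNReal.ofReal_one,
      one_mul, Real.cosh_neg]
    rw [Measure.restrict_congr_set Ioi_ae_eq_Ici]
  rw [← lintegral_add_compl (fun t => ENNReal.ofReal (Real.exp (-(b * Real.cosh t))))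
      measurableSet_Iio, compl_Iio, hneg, hIci, two_mul]

/-- the core analytic identity -/
lemma core {lamh lamg : ℝ} (hh : 0 < lamh) (hg : 0 < lamg) {z : ℝ} (hz : 0 < z) :
    ∫⁻ x, expD lamh x * (ENNReal.ofReal |x⁻¹| * expD lamg (x⁻¹ * z)) =
    ENNReal.ofReal ((2 / (lamg * lamh)) * besselK0 (2 * Real.sqrt (z / (lamg * lamh)))) := by
  have hl : 0 < lamg * lamh := mul_pos hg hh
  set a := Real.sqrt (z / (lamg * lamh)) with ha_def
  have ha : 0 < a := Real.sqrt_pos.2 (div_pos hz hl)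
  have ha2 : a ^ 2 = z / (lamg * lamh) := Real.sq_sqrt (div_pos hz hl).le
  have hza : z = a ^ 2 * (lamg * lamh) := by
    rw [ha2]; field_simp
  set c := lamh * a with hc
  have hcpos : 0 < c := mul_pos hh ha
  set F := fun x : ℝ => expD lamh x * (ENNReal.ofReal |x⁻¹| * expD lamg (x⁻¹ * z)) with hF
  have h0 : ∫⁻ x, F x = ∫⁻ x in Ioi (0:ℝ), F x := by
    rw [← lintegral_add_compl F measurableSet_Iic, compl_Iic]
    have h1' : ∀ x ∈ Iio (0:ℝ), F x = (fun _ => (0:ENNReal)) x := fun x hx => by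
      simp [hF, expD_of_neg (mem_Iio.1 hx)]
    have h1 : ∫⁻ x in Iic (0:ℝ), F x = 0 := by
      rw [← Measure.restrict_congr_set Iio_ae_eq_Iic,
        setLIntegral_congr_fun_ae measurableSet_Iio (ae_of_all _ h1'), lintegral_zero]
    rw [h1, zero_add]
  have himg : (fun t : ℝ => c * Real.exp t) '' univ = Ioi 0 := by
    ext u
    simp only [image_univ, mem_range, mem_Ioi]
    constructor
    · rintro ⟨t, rfl⟩; positivity
    · intro hu
      refine ⟨Real.log (u / c), ?_⟩
      rw [Real.exp_log (by positivity)]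
      field_simp
  have hcov := lintegral_image_eq_lintegral_abs_det_fderiv_mul volume MeasurableSet.univ
      (f' := fun t => (1 : ℝ →L[ℝ] ℝ).smulRight (c * Real.exp t))
      (fun t _ => (((Real.hasDerivAt_exp t).const_mul c).hasFDerivAt).hasFDerivWithinAt)
      (fun t _ t' _ h => by
        have := mul_left_cancel₀ hcpos.ne' h
        exact Real.exp_injective this) F
  rw [h0, ← himg, hcov]
  have hpt : ∀ t : ℝ, ENNReal.ofReal |((1 : ℝ →L[ℝ] ℝ).smulRight (c * Real.exp t)).det|
        * F (c * Real.exp t)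
      = ENNReal.ofReal (1/(lamg*lamh)) * ENNReal.ofReal (Real.exp (-(2 * a * Real.cosh t))) := by
    intro t
    have hu : 0 < Real.exp t := Real.exp_pos t
    have hx : 0 < c * Real.exp t := by positivity
    rw [ContinuousLinearMap.smulRight_one_eq_toSpanSingleton, ContinuousLinearMap.det_toSpanSingleton, hF]
    simp only []
    rw [expD_of_nonneg hx.le,
      expD_of_nonneg (le_of_lt (mul_pos (inv_pos.2 hx) hz)),
      abs_of_pos hx, abs_of_pos (inv_pos.2 hx)]
    rw [← ENNReal.ofReal_mul (by positivity), ← ENNReal.ofReal_mul (by positivity),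
      ← ENNReal.ofReal_mul (by positivity), ← ENNReal.ofReal_mul (by positivity)]
    congr 1
    have e1 : c * Real.exp t / lamh = a * Real.exp t := by
      rw [hc]; field_simp
    have e2 : (c * Real.exp t)⁻¹ * z / lamg = a * (Real.exp t)⁻¹ := by
      rw [hc, hza]; field_simp
    have e3 : 2 * a * Real.cosh t = a * Real.exp t + a * (Real.exp t)⁻¹ := by
      rw [Real.cosh_eq, Real.exp_neg]; ring
    rw [e1, e2, e3, neg_add, Real.exp_add]
    field_simp
  rw [Measure.restrict_univ, lintegral_congr hpt,
    lintegral_const_mul _ (by fun_prop),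
    lintegral_cosh (by positivity : (0:ℝ) < 2 * a), ← mul_assoc,
    show (2 : ENNReal) = ENNReal.ofReal 2 by simp,
    ← ENNReal.ofReal_mul (by positivity), ← ENNReal.ofReal_mul (by positivity)]
  congr 1
  ring

lemma core_neg {lamh lamg : ℝ} {z : ℝ} (hz : z < 0) :
    ∫⁻ x, expD lamh x * (ENNReal.ofReal |x⁻¹| * expD lamg (x⁻¹ * z)) = 0 := by
  rw [← lintegral_zero]
  apply lintegral_congr fun x => ?_
  rcases lt_trichotomy x 0 with hx | hx | hx
  · rw [expD_of_neg hx, zero_mul]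
  · subst hx; simp
  · have h0 : expD lamg (x⁻¹ * z) = 0 :=
      expD_of_neg (mul_neg_of_pos_of_neg (inv_pos.2 hx) hz)
    rw [h0]; simp

/-- scaling lemma: for positive x -/
lemma scale {lam x : ℝ} (hx : 0 < x) {s : Set ℝ} (hs : MeasurableSet s) :
    (volume.withDensity (expD lam)) ((fun y => x * y) ⁻¹' s)
      = ∫⁻ z in s, ENNReal.ofReal |x⁻¹| * expD lam (x⁻¹ * z) := by
  have himg : (fun y => x * y) ⁻¹' s = (fun z => x⁻¹ * z) '' s := by
    ext y
    constructor
    · intro h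
      exact ⟨x * y, h, by field_simp⟩
    · rintro ⟨w, hws, rfl⟩
      simpa [mem_preimage, ← mul_assoc, mul_inv_cancel₀ hx.ne'] using hws
  rw [withDensity_apply _ (hs.preimage (measurable_const_mul x)), himg,
    lintegral_image_eq_lintegral_abs_det_fderiv_mul volume hs
      (f' := fun _ => (1 : ℝ →L[ℝ] ℝ).smulRight x⁻¹)
      (fun w _ => (by simpa using (hasDerivAt_id w).const_mul x⁻¹ :
        HasDerivAt (fun w => x⁻¹ * w) x⁻¹ w).hasFDerivAt.hasFDerivWithinAt)
      (fun a _ b _ h => mul_left_cancel₀ (inv_ne_zero hx.ne') h) _]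
  simp only [ContinuousLinearMap.smulRight_one_eq_toSpanSingleton, ContinuousLinearMap.det_toSpanSingleton]

end ExpProd

theorem stmt_1 {Ω : Type*} [MeasurableSpace Ω] (μ : Measure Ω) [IsProbabilityMeasure μ]
    (X Y : Ω → ℝ) (lamh lamg : ℝ) (hh : 0 < lamh) (hg : 0 < lamg)
    (hX : Measure.map X μ = MeasureTheory.volume.withDensity
      (fun x => ENNReal.ofReal (if 0 ≤ x then (1 / lamh) * Real.exp (-(x / lamh)) else 0)))
    (hY : Measure.map Y μ = MeasureTheory.volume.withDensity
      (fun x => ENNReal.ofReal (if 0 ≤ x then (1 / lamg) * Real.exp (-(x / lamg)) else 0)))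
    (hXY : IndepFun X Y μ) :
    Measure.map (fun ω => X ω * Y ω) μ = MeasureTheory.volume.withDensity
      (fun z => ENNReal.ofReal (if 0 < z then
        (2 / (lamg * lamh)) * besselK0 (2 * Real.sqrt (z / (lamg * lamh))) else 0)) := by
  haveI : Fact (0 < lamh) := ⟨hh⟩
  haveI : Fact (0 < lamg) := ⟨hg⟩
  have hX' : Measure.map X μ = volume.withDensity (ExpProd.expD lamh) := hX
  have hY' : Measure.map Y μ = volume.withDensity (ExpProd.expD lamg) := hY
  have hXm : AEMeasurable X μ := aemeasurable_of_map_neZero (by rw [hX']; infer_instance)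
  have hYm : AEMeasurable Y μ := aemeasurable_of_map_neZero (by rw [hY']; infer_instance)
  have hmap : Measure.map (fun ω => X ω * Y ω) μ
      = Measure.map (fun p : ℝ × ℝ => p.1 * p.2)
        ((volume.withDensity (ExpProd.expD lamh)).prod (volume.withDensity (ExpProd.expD lamg))) := by
    rw [← hX', ← hY', ← (indepFun_iff_map_prod_eq_prod_map_map hXm hYm).1 hXY,
      AEMeasurable.map_map_of_aemeasurable (g := fun p : ℝ × ℝ => p.1 * p.2) (measurable_fst.mul measurable_snd).aemeasurable
        (hXm.prodMk hYm)]
    rfl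
  rw [hmap]
  refine Measure.ext fun s hs => ?_
  have hMs : MeasurableSet ((fun p : ℝ × ℝ => p.1 * p.2) ⁻¹' s) :=
    (measurable_fst.mul measurable_snd) hs
  rw [Measure.map_apply (f := fun p : ℝ × ℝ => p.1 * p.2) (measurable_fst.mul measurable_snd) hs,
    Measure.prod_apply hMs, withDensity_apply _ hs,
    lintegral_withDensity_eq_lintegral_mul _ (ExpProd.expD_measurable lamh)
      (measurable_measure_prodMk_left hMs)]
  have hFm : Measurable (Function.uncurry fun x z : ℝ =>
      ExpProd.expD lamh x * (ENNReal.ofReal |x⁻¹| * ExpProd.expD lamg (x⁻¹ * z))) := by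
    apply Measurable.mul (f := fun p : ℝ × ℝ => ExpProd.expD lamh p.1)
      (g := fun p : ℝ × ℝ => ENNReal.ofReal |p.1⁻¹| * ExpProd.expD lamg (p.1⁻¹ * p.2))
    · exact (ExpProd.expD_measurable lamh).comp measurable_fst
    · apply Measurable.mul (f := fun p : ℝ × ℝ => ENNReal.ofReal |p.1⁻¹|)
        (g := fun p : ℝ × ℝ => ExpProd.expD lamg (p.1⁻¹ * p.2))
      · exact ((measurable_fst.inv).abs).ennreal_ofReal
      · exact (ExpProd.expD_measurable lamg).comp ((measurable_fst.inv).mul measurable_snd)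
  have hinnerm : ∀ x : ℝ, Measurable fun z : ℝ =>
      ENNReal.ofReal |x⁻¹| * ExpProd.expD lamg (x⁻¹ * z) := fun x =>
    measurable_const.mul ((ExpProd.expD_measurable lamg).comp (measurable_const_mul x⁻¹))
  have hae0 : ∀ᵐ x : ℝ, x ≠ 0 := by
    simp [ae_iff, Real.volume_singleton]
  have step1 : ∫⁻ x, (ExpProd.expD lamh * fun x =>
        (volume.withDensity (ExpProd.expD lamg)) (Prod.mk x ⁻¹' ((fun p : ℝ × ℝ => p.1 * p.2) ⁻¹' s))) x
      = ∫⁻ x, ∫⁻ z in s, ExpProd.expD lamh x *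
          (ENNReal.ofReal |x⁻¹| * ExpProd.expD lamg (x⁻¹ * z)) := by
    apply lintegral_congr_ae
    filter_upwards [hae0] with x hx0
    rcases hx0.lt_or_gt with hx | hx
    · simp only [Pi.mul_apply, ExpProd.expD_of_neg hx, zero_mul]
      simp
    · have hpre : (Prod.mk x ⁻¹' ((fun p : ℝ × ℝ => p.1 * p.2) ⁻¹' s)) = (fun y => x * y) ⁻¹' s := rfl
      rw [Pi.mul_apply, hpre, ExpProd.scale hx hs, ← lintegral_const_mul _ (hinnerm x)]
  rw [step1, lintegral_lintegral_swap hFm.aemeasurable]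
  apply lintegral_congr_ae
  refine ae_restrict_of_ae ?_
  filter_upwards [hae0] with z hz0
  rcases hz0.lt_or_gt with hz | hz
  · rw [ExpProd.core_neg hz, if_neg (not_lt.2 hz.le), ENNReal.ofReal_zero]
  · rw [ExpProd.core hh hg hz, if_pos hz]
end

section
/- Let F(x) = 1 - 2√(x/λ)·K₁(2√(x/λ)) with density f(x) = (2/λ)·K₀(2√(x/λ)), λ > 0. Then lim_{x→∞} d/dx[(1-F(x))/f(x)] = 0. -/
open MeasureTheory ProbabilityTheory Real Filter Set

noncomputable def besselI2 (x : ℝ) : ℝ :=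
  ∫ t in Set.Ici (0:ℝ), Real.exp (-(x * Real.cosh t)) * Real.cosh t ^ 2

lemma cosh_lower {t : ℝ} (ht : 0 ≤ t) : (1 + t + t^2/4)/2 ≤ Real.cosh t := by
  have e1 : 1 + t/2 ≤ Real.exp (t/2) := by
    have := Real.add_one_le_exp (t/2); linarith
  have e2 : (1 + t/2)^2 ≤ Real.exp (t/2)^2 := by
    apply pow_le_pow_left₀ (by linarith) e1
  have e3 : Real.exp (t/2)^2 = Real.exp t := by
    rw [sq, ← Real.exp_add]; ring_nf
  have e4 : 0 < Real.exp (-t) := Real.exp_pos _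
  rw [Real.cosh_eq]
  nlinarith

lemma key_bound {x : ℝ} (hx : 0 < x) {n : ℕ} (hn : n ≤ 2) {t : ℝ} (ht : 0 ≤ t) :
    Real.exp (-(x * Real.cosh t)) * Real.cosh t ^ n ≤ Real.exp (18 / x) * Real.exp (-t) := by
  have hc : Real.cosh t ≤ Real.exp t := by
    rw [Real.cosh_eq]
    have : Real.exp (-t) ≤ Real.exp t := Real.exp_le_exp.2 (by linarith)
    linarith [Real.exp_pos t]
  have h1 : Real.cosh t ^ n ≤ Real.exp t ^ n := pow_le_pow_left₀ (Real.cosh_pos t).le hc n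
  have h2 : Real.exp t ^ n = Real.exp (n * t) := by rw [← Real.exp_nat_mul]
  calc Real.exp (-(x * Real.cosh t)) * Real.cosh t ^ n
      ≤ Real.exp (-(x * Real.cosh t)) * Real.exp (n * t) := by
        rw [← h2]; exact mul_le_mul_of_nonneg_left h1 (Real.exp_pos _).le
    _ = Real.exp (n * t - x * Real.cosh t) := by rw [← Real.exp_add]; ring_nf
    _ ≤ Real.exp (18 / x - t) := by
        apply Real.exp_le_exp.2
        have hcl := cosh_lower ht
        have hcl' : x * ((1 + t + t^2/4)/2) ≤ x * Real.cosh t :=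
          mul_le_mul_of_nonneg_left hcl hx.le
        have hn' : (n : ℝ) ≤ 2 := by exact_mod_cast hn
        have hB : 3 * t - x/8 * t^2 ≤ 18 / x := by
          rw [le_div_iff₀ hx]
          nlinarith [sq_nonneg (x * t - 12)]
        nlinarith [mul_nonneg ht ht, mul_nonneg (mul_nonneg hx.le ht) ht]
    _ = Real.exp (18 / x) * Real.exp (-t) := by rw [← Real.exp_add]; ring_nf

lemma integrableOn_aux {x : ℝ} (hx : 0 < x) {n : ℕ} (hn : n ≤ 2) :
    IntegrableOn (fun t => Real.exp (-(x * Real.cosh t)) * Real.cosh t ^ n) (Set.Ici (0:ℝ)) := by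
  have hg : IntegrableOn (fun t => Real.exp (18/x) * Real.exp (-t)) (Set.Ici (0:ℝ)) := by
    rw [integrableOn_Ici_iff_integrableOn_Ioi]
    have := (exp_neg_integrableOn_Ioi 0 (zero_lt_one)).const_mul (Real.exp (18/x))
    simpa [IntegrableOn] using this
  refine hg.mono' ?_ ?_
  · exact (((Real.continuous_exp.comp ((continuous_const.mul Real.continuous_cosh).neg)).mul
      (Real.continuous_cosh.pow n))).aestronglyMeasurable
  · rw [ae_restrict_iff' measurableSet_Ici]
    filter_upwards with t ht
    rw [Real.norm_eq_abs, abs_of_nonneg (by positivity)]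
    exact key_bound hx hn ht

lemma integrableK0 {x : ℝ} (hx : 0 < x) :
    IntegrableOn (fun t => Real.exp (-(x * Real.cosh t))) (Set.Ici (0:ℝ)) := by
  have := integrableOn_aux hx (n := 0) (by norm_num)
  simpa using this

lemma integrableK1 {x : ℝ} (hx : 0 < x) :
    IntegrableOn (fun t => Real.exp (-(x * Real.cosh t)) * Real.cosh t) (Set.Ici (0:ℝ)) := by
  have := integrableOn_aux hx (n := 1) (by norm_num)
  simpa using this

lemma besselK0_pos {x : ℝ} (hx : 0 < x) : 0 < besselK0 x := by
  rw [besselK0, setIntegral_pos_iff_support_of_nonneg_ae _ (integrableK0 hx)]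
  · have hsupp : (Function.support fun t => Real.exp (-(x * Real.cosh t))) = Set.univ := by
      ext t; simp [Function.mem_support, Real.exp_ne_zero]
    rw [hsupp, Set.univ_inter, Real.volume_Ici]
    simp
  · filter_upwards with t using (Real.exp_pos _).le

lemma besselK0_le_besselK1 {x : ℝ} (hx : 0 < x) : besselK0 x ≤ besselK1 x := by
  refine setIntegral_mono_on (integrableK0 hx) (integrableK1 hx) measurableSet_Ici ?_
  intro t _
  nth_rewrite 1 [← mul_one (Real.exp (-(x * Real.cosh t)))]
  exact mul_le_mul_of_nonneg_left (Real.one_le_cosh t) (Real.exp_pos _).le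

lemma bessel_identity {x : ℝ} (hx : 0 < x) :
    x * besselI2 x = besselK1 x + x * besselK0 x := by
  set A : ℝ → ℝ := fun t => Real.exp (-(x * Real.cosh t)) * Real.cosh t with hA
  set B : ℝ → ℝ := fun t => Real.exp (-(x * Real.cosh t)) * Real.cosh t ^ 2 with hB
  set C : ℝ → ℝ := fun t => Real.exp (-(x * Real.cosh t)) with hC
  have hiA := integrableOn_aux hx (n := 1) (by norm_num)
  have hiB := integrableOn_aux hx (n := 2) (by norm_num)
  have hiC := integrableK0 hx
  have hiA' : IntegrableOn A (Set.Ici (0:ℝ)) := by simpa [hA] using hiA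
  set f : ℝ → ℝ := fun t => Real.exp (-(x * Real.cosh t)) * Real.sinh t with hf
  set f' : ℝ → ℝ := fun t => A t - x * B t + x * C t with hf'
  have hderiv : ∀ t ∈ Set.Ici (0:ℝ), HasDerivAt f (f' t) t := by
    intro t _
    have h1 : HasDerivAt (fun t => -(x * Real.cosh t)) (-(x * Real.sinh t)) t :=
      ((Real.hasDerivAt_cosh t).const_mul x).neg
    have h2 : HasDerivAt (fun t => Real.exp (-(x * Real.cosh t)))
        (Real.exp (-(x * Real.cosh t)) * -(x * Real.sinh t)) t := h1.exp
    have h3 := h2.mul (Real.hasDerivAt_sinh t)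
    refine h3.congr_deriv ?_
    symm
    have hs : Real.sinh t ^ 2 = Real.cosh t ^ 2 - 1 := by
      have := Real.cosh_sq_sub_sinh_sq t; linarith
    simp only [hf', hA, hB, hC]
    linear_combination (x * Real.exp (-(x * Real.cosh t))) * hs
  have htend : Tendsto f atTop (nhds 0) := by
    have hg0 : Tendsto (fun t : ℝ => Real.exp (18/x) * Real.exp (-t)) atTop (nhds 0) := by
      simpa using (Real.tendsto_exp_neg_atTop_nhds_zero.const_mul (Real.exp (18/x)))
    apply squeeze_zero_norm' _ hg0
    filter_upwards [eventually_ge_atTop (0:ℝ)] with t ht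
    have hsinh : |Real.sinh t| ≤ Real.cosh t := by
      rw [Real.abs_sinh, abs_of_nonneg ht, Real.sinh_eq, Real.cosh_eq]
      have := Real.exp_pos (-t)
      linarith
    have h1 : ‖f t‖ ≤ A t := by
      rw [hf, Real.norm_eq_abs, abs_mul, abs_of_nonneg (Real.exp_pos _).le]
      exact mul_le_mul_of_nonneg_left hsinh (Real.exp_pos _).le
    calc ‖f t‖ ≤ A t := h1
      _ ≤ Real.exp (18/x) * Real.exp (-t) := by
          have := key_bound hx (n := 1) (by norm_num) ht; simpa [hA] using this
  have hIA := hiA'.mono_set (Set.Ioi_subset_Ici_self (a := (0:ℝ)))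
  have hIB := (hiB.mono_set (Set.Ioi_subset_Ici_self (a := (0:ℝ)))).const_mul x
  have hIC := (hiC.mono_set (Set.Ioi_subset_Ici_self (a := (0:ℝ)))).const_mul x
  have hint : IntegrableOn f' (Set.Ioi (0:ℝ)) := (hIA.sub hIB).add hIC
  have key := integral_Ioi_of_hasDerivAt_of_tendsto' hderiv hint htend
  have hf0 : f 0 = 0 := by simp [hf]
  rw [hf0, sub_zero] at key
  have hsplit : ∫ t in Set.Ioi (0:ℝ), f' t =
      (∫ t in Set.Ioi (0:ℝ), A t) - x * (∫ t in Set.Ioi (0:ℝ), B t)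
        + x * (∫ t in Set.Ioi (0:ℝ), C t) := by
    have hIAB : Integrable (fun t => A t - x * B t) (volume.restrict (Set.Ioi (0:ℝ))) := by
      exact hIA.sub hIB
    rw [show (fun t => f' t) = fun t => (A t - x * B t) + x * C t from rfl]
    rw [integral_add hIAB hIC, integral_sub hIA hIB, integral_const_mul, integral_const_mul]
  rw [hsplit] at key
  have eA : besselK1 x = ∫ t in Set.Ioi (0:ℝ), A t := by
    rw [besselK1, integral_Ici_eq_integral_Ioi]
  have eB : besselI2 x = ∫ t in Set.Ioi (0:ℝ), B t := by
    rw [besselI2, integral_Ici_eq_integral_Ioi]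
  have eC : besselK0 x = ∫ t in Set.Ioi (0:ℝ), C t := by
    rw [besselK0, integral_Ici_eq_integral_Ioi]
  rw [← eA, ← eB, ← eC] at key
  linarith

lemma cauchy_schwarz_bessel {x : ℝ} (hx : 0 < x) :
    besselK1 x ^ 2 ≤ besselK0 x * besselI2 x := by
  set u : ℝ := besselK1 x / besselK0 x with hu
  have hK0 := besselK0_pos hx
  have hiB := integrableOn_aux hx (n := 2) (by norm_num)
  have hiK0 := integrableK0 hx
  have hiK1 := integrableK1 hx
  have hnn : 0 ≤ ∫ t in Set.Ici (0:ℝ),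
      (u ^ 2 * Real.exp (-(x * Real.cosh t))
        - 2 * u * (Real.exp (-(x * Real.cosh t)) * Real.cosh t)
        + Real.exp (-(x * Real.cosh t)) * Real.cosh t ^ 2) := by
    apply setIntegral_nonneg measurableSet_Ici
    intro t _
    have h : u ^ 2 * Real.exp (-(x * Real.cosh t))
        - 2 * u * (Real.exp (-(x * Real.cosh t)) * Real.cosh t)
        + Real.exp (-(x * Real.cosh t)) * Real.cosh t ^ 2
        = Real.exp (-(x * Real.cosh t)) * (u - Real.cosh t) ^ 2 := by ring
    rw [h]
    positivity
  have hsplit : (∫ t in Set.Ici (0:ℝ),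
      (u ^ 2 * Real.exp (-(x * Real.cosh t))
        - 2 * u * (Real.exp (-(x * Real.cosh t)) * Real.cosh t)
        + Real.exp (-(x * Real.cosh t)) * Real.cosh t ^ 2))
      = u ^ 2 * besselK0 x - 2 * u * besselK1 x + besselI2 x := by
    have h1 : Integrable (fun t => u ^ 2 * Real.exp (-(x * Real.cosh t)))
        (volume.restrict (Set.Ici (0:ℝ))) := hiK0.const_mul _
    have h2 : Integrable (fun t => 2 * u * (Real.exp (-(x * Real.cosh t)) * Real.cosh t))
        (volume.restrict (Set.Ici (0:ℝ))) := hiK1.const_mul _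
    have h12 : Integrable (fun t => u ^ 2 * Real.exp (-(x * Real.cosh t))
        - 2 * u * (Real.exp (-(x * Real.cosh t)) * Real.cosh t))
        (volume.restrict (Set.Ici (0:ℝ))) := by exact h1.sub h2
    rw [integral_add h12 hiB, integral_sub h1 h2, integral_const_mul, integral_const_mul]
    rw [besselK0, besselK1, besselI2]
  rw [hsplit] at hnn
  have e : u ^ 2 * besselK0 x - 2 * u * besselK1 x + besselI2 x
      = besselI2 x - besselK1 x ^ 2 / besselK0 x := by
    rw [hu]; field_simp; ring
  rw [e] at hnn
  have h : besselK1 x ^ 2 / besselK0 x ≤ besselI2 x := by linarith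
  calc besselK1 x ^ 2 = (besselK1 x ^ 2 / besselK0 x) * besselK0 x := by
        field_simp
    _ ≤ besselI2 x * besselK0 x := mul_le_mul_of_nonneg_right h hK0.le
    _ = besselK0 x * besselI2 x := by ring

lemma ratio_bound {x : ℝ} (hx : 1 ≤ x) :
    0 ≤ (besselK1 x / besselK0 x) ^ 2 - 1 ∧
      (besselK1 x / besselK0 x) ^ 2 - 1 ≤ 3 / x := by
  have hx0 : (0:ℝ) < x := by linarith
  have hK0 := besselK0_pos hx0
  have hle := besselK0_le_besselK1 hx0
  have hcs := cauchy_schwarz_bessel hx0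
  have hid := bessel_identity hx0
  set K0 := besselK0 x
  set K1 := besselK1 x
  set I2 := besselI2 x
  constructor
  · have h1 : 1 ≤ K1 / K0 := (one_le_div hK0).2 hle
    nlinarith [h1]
  · -- x * K1^2 ≤ K0 * K1 + x * K0^2
    have h2 : x * K1 ^ 2 ≤ K0 * K1 + x * K0 ^ 2 := by nlinarith [hcs, hid]
    -- x * (K1 - K0) ≤ K0
    have h3 : x * (K1 - K0) ≤ K0 := by
      have hpos : 0 < K1 + K0 := by linarith
      have : x * (K1 - K0) * (K1 + K0) ≤ K0 * (K1 + K0) := by nlinarith [h2]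
      exact le_of_mul_le_mul_right this hpos
    -- K1 ≤ K0 + K0 / x
    have h4 : K1 ≤ K0 + K0 / x := by
      rw [← sub_le_iff_le_add']
      rw [le_div_iff₀ hx0]
      linarith [h3]
    rw [div_pow, sub_le_iff_le_add, div_le_iff₀ (pow_pos hK0 2)]
    have ht : 0 < 1/x := by positivity
    have ht1 : 1/x ≤ 1 := by rw [div_le_one hx0]; exact hx
    have h4' : K1 ≤ K0 * (1 + 1/x) := by
      rw [mul_add, mul_one, mul_one_div]; exact h4
    have hK1nn : 0 ≤ K1 := le_trans hK0.le hle
    calc K1 ^ 2 ≤ (K0 * (1 + 1/x)) ^ 2 := by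
          apply pow_le_pow_left₀ hK1nn h4'
      _ = K0 ^ 2 * (1 + 2 * (1/x) + (1/x)^2) := by ring
      _ ≤ K0 ^ 2 * (1 + 3 * (1/x)) := by
          apply mul_le_mul_of_nonneg_left _ (sq_nonneg K0)
          nlinarith [ht, ht1]
      _ = (3 / x + 1) * K0 ^ 2 := by rw [mul_one_div]; ring

lemma exp_cosh_hasDerivAt (t y : ℝ) (n : ℕ) :
    HasDerivAt (fun y => Real.exp (-(y * Real.cosh t)) * Real.cosh t ^ n)
      (-(Real.exp (-(y * Real.cosh t)) * Real.cosh t ^ (n+1))) y := by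
  have h1 : HasDerivAt (fun y : ℝ => -(y * Real.cosh t)) (-(Real.cosh t)) y := by
    exact (hasDerivAt_mul_const (Real.cosh t)).neg
  have h2 := h1.exp
  have h3 := h2.mul_const (Real.cosh t ^ n)
  refine h3.congr_deriv ?_
  symm
  ring

lemma bound_aux {x y t : ℝ} (hx : 0 < x) (hy : y ∈ Metric.ball x (x/2)) (ht : 0 ≤ t)
    {n : ℕ} (hn : n ≤ 2) :
    Real.exp (-(y * Real.cosh t)) * Real.cosh t ^ n
      ≤ Real.exp (18 / (x/2)) * Real.exp (-t) := by
  have hy2 : x/2 < y := by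
    have := Metric.mem_ball.1 hy
    rw [Real.dist_eq, abs_lt] at this
    linarith [this.1]
  have h1 : Real.exp (-(y * Real.cosh t)) ≤ Real.exp (-(x/2 * Real.cosh t)) := by
    apply Real.exp_le_exp.2
    have := (Real.cosh_pos t).le
    nlinarith
  calc Real.exp (-(y * Real.cosh t)) * Real.cosh t ^ n
      ≤ Real.exp (-(x/2 * Real.cosh t)) * Real.cosh t ^ n :=
        mul_le_mul_of_nonneg_right h1 (by positivity)
    _ ≤ Real.exp (18 / (x/2)) * Real.exp (-t) := key_bound (by linarith) hn ht

lemma hasDerivAt_besselK0 {x : ℝ} (hx : 0 < x) :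
    HasDerivAt besselK0 (-(besselK1 x)) x := by
  have h := hasDerivAt_integral_of_dominated_loc_of_deriv_le
    (μ := volume.restrict (Set.Ici (0:ℝ)))
    (F := fun y t => Real.exp (-(y * Real.cosh t)))
    (F' := fun y t => -(Real.exp (-(y * Real.cosh t)) * Real.cosh t))
    (x₀ := x) (s := Metric.ball x (x/2))
    (bound := fun t => Real.exp (18 / (x/2)) * Real.exp (-t))
    (Metric.ball_mem_nhds x (half_pos hx))
    (Eventually.of_forall fun y =>
      ((Real.continuous_exp.comp
        ((continuous_const.mul Real.continuous_cosh).neg)).aestronglyMeasurable))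
    (integrableK0 hx)
    (((Real.continuous_exp.comp
        ((continuous_const.mul Real.continuous_cosh).neg)).mul
        Real.continuous_cosh).neg.aestronglyMeasurable)
    ?_ ?_ ?_
  · have : besselK1 x = ∫ t in Set.Ici (0:ℝ),
        Real.exp (-(x * Real.cosh t)) * Real.cosh t := rfl
    have h2 := h.2
    rw [integral_neg] at h2
    exact h2
  · rw [ae_restrict_iff' measurableSet_Ici]
    filter_upwards with t ht y hy
    rw [norm_neg, Real.norm_eq_abs, abs_of_nonneg (by positivity)]
    have := bound_aux hx hy ht (n := 1) (by norm_num)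
    simpa using this
  · have hI : IntegrableOn (fun t => Real.exp (18/(x/2)) * Real.exp (-t)) (Set.Ici (0:ℝ)) := by
      rw [integrableOn_Ici_iff_integrableOn_Ioi]
      have := (exp_neg_integrableOn_Ioi 0 (zero_lt_one)).const_mul (Real.exp (18/(x/2)))
      simpa [IntegrableOn] using this
    exact hI
  · rw [ae_restrict_iff' measurableSet_Ici]
    filter_upwards with t ht y hy
    have := exp_cosh_hasDerivAt t y 0
    simpa using this

lemma hasDerivAt_besselK1 {x : ℝ} (hx : 0 < x) :
    HasDerivAt besselK1 (-(besselI2 x)) x := by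
  have h := hasDerivAt_integral_of_dominated_loc_of_deriv_le
    (μ := volume.restrict (Set.Ici (0:ℝ)))
    (F := fun y t => Real.exp (-(y * Real.cosh t)) * Real.cosh t)
    (F' := fun y t => -(Real.exp (-(y * Real.cosh t)) * Real.cosh t ^ 2))
    (x₀ := x) (s := Metric.ball x (x/2))
    (bound := fun t => Real.exp (18 / (x/2)) * Real.exp (-t))
    (Metric.ball_mem_nhds x (half_pos hx))
    (Eventually.of_forall fun y =>
      (((Real.continuous_exp.comp
        ((continuous_const.mul Real.continuous_cosh).neg)).mul
        Real.continuous_cosh).aestronglyMeasurable))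
    (integrableK1 hx)
    ((((Real.continuous_exp.comp
        ((continuous_const.mul Real.continuous_cosh).neg)).mul
        (Real.continuous_cosh.pow 2)).neg).aestronglyMeasurable)
    ?_ ?_ ?_
  · have h2 := h.2
    rw [integral_neg] at h2
    exact h2
  · rw [ae_restrict_iff' measurableSet_Ici]
    filter_upwards with t ht y hy
    rw [norm_neg, Real.norm_eq_abs, abs_of_nonneg (by positivity)]
    exact bound_aux hx hy ht (n := 2) (by norm_num)
  · have hI : IntegrableOn (fun t => Real.exp (18/(x/2)) * Real.exp (-t)) (Set.Ici (0:ℝ)) := by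
      rw [integrableOn_Ici_iff_integrableOn_Ioi]
      have := (exp_neg_integrableOn_Ioi 0 (zero_lt_one)).const_mul (Real.exp (18/(x/2)))
      simpa [IntegrableOn] using this
    exact hI
  · rw [ae_restrict_iff' measurableSet_Ici]
    filter_upwards with t ht y hy
    have := exp_cosh_hasDerivAt t y 1
    simpa using this

lemma quotient_algebra (lam s cv K0v K1v I2v : ℝ) (hlam : lam ≠ 0) (hK0 : K0v ≠ 0)
    (hs : s ≠ 0) (hcs : cv * s = 2 / lam) (hI : s * I2v = K1v + s * K0v) :
    ((cv * K1v + s * (-I2v * cv)) * (2 / lam * K0v)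
        - (1 - (1 - s * K1v)) * (2 / lam * (-K1v * cv))) / (2 / lam * K0v) ^ 2
      = (K1v / K0v) ^ 2 - 1 := by
  have hc : cv = 2 / (lam * s) := by
    field_simp at hcs ⊢
    linarith [hcs]
  have hI2 : I2v = (K1v + s * K0v) / s := by
    field_simp
    linarith [hI]
  rw [hc, hI2]
  field_simp
  ring

lemma deriv_formula (lam : ℝ) (hlam : 0 < lam) {x : ℝ} (hx : 0 < x) :
    deriv (fun y : ℝ =>
      (1 - (1 - 2 * Real.sqrt (y / lam) * besselK1 (2 * Real.sqrt (y / lam)))) /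
        ((2 / lam) * besselK0 (2 * Real.sqrt (y / lam)))) x
    = (besselK1 (2 * Real.sqrt (x / lam)) / besselK0 (2 * Real.sqrt (x / lam))) ^ 2 - 1 := by
  have hxl : 0 < x / lam := div_pos hx hlam
  have hsq : 0 < Real.sqrt (x / lam) := Real.sqrt_pos.2 hxl
  set s : ℝ := 2 * Real.sqrt (x / lam) with hsdef
  have hs0 : 0 < s := by positivity
  set cv : ℝ := 2 * (1 / (2 * Real.sqrt (x / lam)) * (1 / lam)) with hcdef
  have hdiv : HasDerivAt (fun y : ℝ => y / lam) (1 / lam) x := by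
    simpa using (hasDerivAt_id x).div_const lam
  have hcomp : HasDerivAt (fun y : ℝ => Real.sqrt (y / lam))
      (1 / (2 * Real.sqrt (x / lam)) * (1 / lam)) x :=
    (Real.hasDerivAt_sqrt (ne_of_gt hxl)).comp x hdiv
  have hS : HasDerivAt (fun y : ℝ => 2 * Real.sqrt (y / lam)) cv x := hcomp.const_mul 2
  have hK1c : HasDerivAt (fun y : ℝ => besselK1 (2 * Real.sqrt (y / lam)))
      (-(besselI2 s) * cv) x := HasDerivAt.comp x (h := fun y : ℝ => 2 * Real.sqrt (y / lam)) (hasDerivAt_besselK1 hs0) hS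
  have hK0c : HasDerivAt (fun y : ℝ => besselK0 (2 * Real.sqrt (y / lam)))
      (-(besselK1 s) * cv) x := HasDerivAt.comp x (h := fun y : ℝ => 2 * Real.sqrt (y / lam)) (hasDerivAt_besselK0 hs0) hS
  have hN : HasDerivAt (fun y : ℝ => 2 * Real.sqrt (y / lam) * besselK1 (2 * Real.sqrt (y / lam)))
      (cv * besselK1 s + s * (-(besselI2 s) * cv)) x := hS.mul hK1c
  have hN' : HasDerivAt (fun y : ℝ =>
      1 - (1 - 2 * Real.sqrt (y / lam) * besselK1 (2 * Real.sqrt (y / lam))))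
      (cv * besselK1 s + s * (-(besselI2 s) * cv)) x := by
    simpa using (hN.const_sub 1).const_sub 1
  have hD : HasDerivAt (fun y : ℝ => (2 / lam) * besselK0 (2 * Real.sqrt (y / lam)))
      ((2 / lam) * (-(besselK1 s) * cv)) x := hK0c.const_mul (2 / lam)
  have hD0 : (2 / lam) * besselK0 s ≠ 0 := by
    have := besselK0_pos hs0
    positivity
  have hQ := hN'.div hD hD0
  rw [HasDerivAt.deriv (f := fun y : ℝ => (1 - (1 - 2 * Real.sqrt (y / lam) * besselK1 (2 * Real.sqrt (y / lam)))) / ((2 / lam) * besselK0 (2 * Real.sqrt (y / lam)))) hQ]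
  have hcs : cv * s = 2 / lam := by
    rw [hcdef, hsdef]
    field_simp
  have hI := bessel_identity hs0
  have hK0ne : besselK0 s ≠ 0 := (besselK0_pos hs0).ne'
  have := quotient_algebra lam s cv (besselK0 s) (besselK1 s) (besselI2 s)
    (ne_of_gt hlam) hK0ne (ne_of_gt hs0) hcs hI
  rw [← this]

theorem stmt_11 (lam : ℝ) (hlam : 0 < lam) :
    Filter.Tendsto (fun x : ℝ => deriv (fun y : ℝ =>
      (1 - (1 - 2 * Real.sqrt (y / lam) * besselK1 (2 * Real.sqrt (y / lam)))) /
        ((2 / lam) * besselK0 (2 * Real.sqrt (y / lam)))) x)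
      Filter.atTop (nhds 0) := by
  have hsqrt : Tendsto Real.sqrt atTop atTop := by
    rw [tendsto_atTop]
    intro b
    filter_upwards [eventually_ge_atTop ((max b 0) ^ 2)] with x hx
    have h0 : (0:ℝ) ≤ max b 0 := le_max_right _ _
    have h1 := Real.sqrt_le_sqrt hx
    rw [Real.sqrt_sq h0] at h1
    exact le_trans (le_max_left _ _) h1
  have hst : Tendsto (fun x : ℝ => 2 * Real.sqrt (x / lam)) atTop atTop :=
    Tendsto.const_mul_atTop two_pos (hsqrt.comp (tendsto_id.atTop_div_const hlam))
  have hub : Tendsto (fun x : ℝ => 3 / (2 * Real.sqrt (x / lam))) atTop (nhds 0) :=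
    tendsto_const_nhds.div_atTop hst
  have hmain : Tendsto (fun x : ℝ =>
      (besselK1 (2 * Real.sqrt (x / lam)) / besselK0 (2 * Real.sqrt (x / lam))) ^ 2 - 1)
      atTop (nhds 0) := by
    apply tendsto_of_tendsto_of_tendsto_of_le_of_le' tendsto_const_nhds hub
    · filter_upwards [hst.eventually (eventually_ge_atTop 1)] with x hx
      exact (ratio_bound hx).1
    · filter_upwards [hst.eventually (eventually_ge_atTop 1)] with x hx
      exact (ratio_bound hx).2
  apply hmain.congr'
  filter_upwards [eventually_gt_atTop (0:ℝ)] with x hx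
  exact (deriv_formula lam hlam hx).symm
end

section
/- Let a_K = (λ/4)·(ln(K√(π/2)) + (1/2)ln(ln(K√π·λ^{-1/4})))² and b_K = (λ/2)·ln(K√π·λ^{-1/4}) with λ > 0. Then, for any constants c > 0 and E₀ ∈ (0,1), the quantity (E₀/N)·log₂(1 + c(a_K + b_K)) + ((1-E₀)/N)·log₂(1 + c·a_K) grows asymptotically like (2/(N ln 2))·ln(ln K) as K → ∞, i.e., the ratio of the expression to ln(ln K) converges to 2/(N ln 2). -/
open MeasureTheory ProbabilityTheory Real Filter Set

section Aux
variable {α : Type*} {l : Filter α}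

lemma aux_log_sub {u v : α → ℝ} {a : ℝ} (ha : 0 < a)
    (hv : Tendsto v l atTop)
    (h : Tendsto (fun K => u K / v K) l (nhds a)) :
    Tendsto (fun K => Real.log (u K) - Real.log (v K)) l (nhds (Real.log a)) := by
  have hvpos : ∀ᶠ K in l, 0 < v K := hv.eventually_gt_atTop 0
  have hupos : ∀ᶠ K in l, 0 < u K := by
    have h2 := h.eventually (eventually_gt_nhds (show a / 2 < a by linarith))
    filter_upwards [h2, hvpos] with K h1 h2
    by_contra hcon
    push_neg at hcon
    have : u K / v K ≤ 0 := div_nonpos_of_nonpos_of_nonneg hcon h2.le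
    linarith
  have hmain : Tendsto (fun K => Real.log (u K / v K)) l (nhds (Real.log a)) :=
    ((Real.continuousAt_log (ne_of_gt ha)).tendsto).comp h
  refine hmain.congr' ?_
  filter_upwards [hupos, hvpos] with K h1 h2
  rw [Real.log_div h1.ne' h2.ne']

lemma aux_div_one {u w : α → ℝ} {b : ℝ}
    (hw : Tendsto w l atTop)
    (h : Tendsto (fun K => u K - w K) l (nhds b)) :
    Tendsto (fun K => u K / w K) l (nhds 1) := by
  have h0 : Tendsto (fun K => 1 + (u K - w K) / w K) l (nhds 1) := by
    have := (h.div_atTop hw).const_add 1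
    simpa using this
  refine h0.congr' ?_
  filter_upwards [hw.eventually_gt_atTop 0] with K hK
  field_simp
  ring

lemma aux_atTop {u v : α → ℝ} {a : ℝ} (ha : 0 < a) (hv : Tendsto v l atTop)
    (h : Tendsto (fun K => u K / v K) l (nhds a)) : Tendsto u l atTop := by
  have := hv.atTop_mul_pos ha h
  refine this.congr' ?_
  filter_upwards [hv.eventually_gt_atTop 0] with K hK
  field_simp

/-- If `g ~ log K` and `u = o(g²)` then `log (1 + c ((λ/4) g² + u)) / log log K → 2`. -/
lemma aux_main {g u : ℕ → ℝ} {lam c : ℝ} (hlam : 0 < lam) (hc : 0 < c)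
    (hgL : Tendsto (fun K => g K / Real.log K) atTop (nhds 1))
    (hu : Tendsto (fun K => u K / (g K) ^ 2) atTop (nhds 0)) :
    Tendsto (fun K => Real.log (1 + c * ((lam / 4) * (g K) ^ 2 + u K))
      / Real.log (Real.log K)) atTop (nhds 2) := by
  have hL : Tendsto (fun K : ℕ => Real.log K) atTop atTop :=
    Real.tendsto_log_atTop.comp tendsto_natCast_atTop_atTop
  have hLL : Tendsto (fun K : ℕ => Real.log (Real.log K)) atTop atTop :=
    Real.tendsto_log_atTop.comp hL
  have hg : Tendsto g atTop atTop := aux_atTop one_pos hL hgL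
  have hlog_sub : Tendsto (fun K => Real.log (g K) - Real.log (Real.log K)) atTop (nhds 0) := by
    simpa using aux_log_sub one_pos hL hgL
  have hlogg : Tendsto (fun K => Real.log (g K) / Real.log (Real.log K)) atTop (nhds 1) :=
    aux_div_one hLL (by simpa using hlog_sub)
  have hg2 : Tendsto (fun K => (g K) ^ 2) atTop atTop := by
    have := hg.atTop_mul_atTop₀ hg
    refine this.congr (fun K => by ring)
  set v : ℕ → ℝ := fun K => (lam / 4) * (g K) ^ 2 + u K with hv
  have hvg2 : Tendsto (fun K => v K / (g K) ^ 2) atTop (nhds (lam / 4)) := by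
    have h1 : Tendsto (fun K => lam / 4 + u K / (g K) ^ 2) atTop (nhds (lam / 4)) := by
      simpa using hu.const_add (lam / 4)
    refine h1.congr' ?_
    filter_upwards [hg.eventually_gt_atTop 0] with K hK
    have : (g K) ^ 2 ≠ 0 := by positivity
    field_simp [hv]
    simp only [hv]
    ring
  have hvtop : Tendsto v atTop atTop := aux_atTop (by linarith) hg2 hvg2
  have hlogv : Tendsto (fun K => Real.log (v K) - 2 * Real.log (g K)) atTop
      (nhds (Real.log (lam / 4))) := by
    have := aux_log_sub (by linarith : (0:ℝ) < lam / 4) hg2 hvg2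
    refine this.congr (fun K => ?_)
    rw [Real.log_pow]
    push_cast
    ring
  have hfin : Tendsto (fun K => Real.log (1 + c * v K) - Real.log (v K)) atTop
      (nhds (Real.log c)) := by
    refine aux_log_sub hc hvtop ?_
    have h1 : Tendsto (fun K => (v K)⁻¹ + c) atTop (nhds c) := by
      simpa using hvtop.inv_tendsto_atTop.add_const c
    refine h1.congr' ?_
    filter_upwards [hvtop.eventually_gt_atTop 0] with K hK
    field_simp
  have hsum : Tendsto (fun K => ((Real.log (v K) - 2 * Real.log (g K))
      + (Real.log (1 + c * v K) - Real.log (v K))) / Real.log (Real.log K)) atTop (nhds 0) :=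
    (hlogv.add hfin).div_atTop hLL
  have h2 : Tendsto (fun K => 2 * (Real.log (g K) / Real.log (Real.log K))
      + ((Real.log (v K) - 2 * Real.log (g K))
        + (Real.log (1 + c * v K) - Real.log (v K))) / Real.log (Real.log K)) atTop (nhds 2) := by
    have := (hlogg.const_mul 2).add hsum
    simpa using this
  refine h2.congr (fun K => ?_)
  ring

end Aux

theorem stmt_15 (lam N c e0 : ℝ) (hlam : 0 < lam) (hN : 0 < N) (hc : 0 < c)
    (he : e0 ∈ Set.Ioo (0:ℝ) 1) :
    Filter.Tendsto (fun K : ℕ =>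
      ((e0 / N) * Real.logb 2 (1 + c *
          ((lam / 4) * (Real.log ((K:ℝ) * Real.sqrt (Real.pi / 2))
              + (1 / 2) * Real.log (Real.log ((K:ℝ) * Real.sqrt Real.pi * lam ^ (-(1/4) : ℝ)))) ^ 2
            + (lam / 2) * Real.log ((K:ℝ) * Real.sqrt Real.pi * lam ^ (-(1/4) : ℝ))))
        + ((1 - e0) / N) * Real.logb 2 (1 + c *
          ((lam / 4) * (Real.log ((K:ℝ) * Real.sqrt (Real.pi / 2))
              + (1 / 2) * Real.log (Real.log ((K:ℝ) * Real.sqrt Real.pi * lam ^ (-(1/4) : ℝ)))) ^ 2)))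
      / Real.log (Real.log (K:ℝ)))
      Filter.atTop (nhds (2 / (N * Real.log 2))) := by
  set C1 : ℝ := Real.log (Real.sqrt (Real.pi / 2)) with hC1
  set C2 : ℝ := Real.log (Real.sqrt Real.pi * lam ^ (-(1/4) : ℝ)) with hC2
  have hL : Tendsto (fun K : ℕ => Real.log K) atTop atTop :=
    Real.tendsto_log_atTop.comp tendsto_natCast_atTop_atTop
  -- eventual rewriting of the statement's logs
  have heq1 : ∀ᶠ K : ℕ in atTop,
      Real.log ((K:ℝ) * Real.sqrt (Real.pi / 2)) = Real.log K + C1 := by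
    filter_upwards [eventually_ge_atTop 1] with K hK
    have hK0 : (K:ℝ) ≠ 0 := by positivity
    have hs : Real.sqrt (Real.pi / 2) ≠ 0 := by
      have : (0:ℝ) < Real.pi / 2 := by positivity
      positivity
    rw [Real.log_mul hK0 hs]
  have heq2 : ∀ᶠ K : ℕ in atTop,
      Real.log ((K:ℝ) * Real.sqrt Real.pi * lam ^ (-(1/4) : ℝ)) = Real.log K + C2 := by
    filter_upwards [eventually_ge_atTop 1] with K hK
    have hK0 : (K:ℝ) ≠ 0 := by positivity
    have hs : Real.sqrt Real.pi * lam ^ (-(1/4) : ℝ) ≠ 0 := by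
      have h1 : (0:ℝ) < Real.sqrt Real.pi := Real.sqrt_pos.mpr Real.pi_pos
      have h2 : (0:ℝ) < lam ^ (-(1/4) : ℝ) := Real.rpow_pos_of_pos hlam _
      positivity
    rw [mul_assoc, Real.log_mul hK0 hs]
  -- the statement's "g"
  set g : ℕ → ℝ := fun K => Real.log ((K:ℝ) * Real.sqrt (Real.pi / 2))
      + (1 / 2) * Real.log (Real.log ((K:ℝ) * Real.sqrt Real.pi * lam ^ (-(1/4) : ℝ))) with hg
  -- m := log K + C2
  have hm : Tendsto (fun K : ℕ => Real.log K + C2) atTop atTop :=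
    tendsto_atTop_add_const_right _ _ hL
  have hmL : Tendsto (fun K : ℕ => (Real.log K + C2) / Real.log K) atTop (nhds 1) := by
    refine aux_div_one (b := C2) hL ?_
    have : Tendsto (fun _ : ℕ => C2) atTop (nhds C2) := tendsto_const_nhds
    refine this.congr (fun K => by ring)
  -- log(log K + C2) / log K → 0
  have hlogm : Tendsto (fun K : ℕ => Real.log (Real.log K + C2) / (Real.log K + C2))
      atTop (nhds 0) := by
    have h0 : Tendsto (fun x : ℝ => Real.log x / x) atTop (nhds 0) := by
      simpa using Real.isLittleO_log_id_atTop.tendsto_div_nhds_zero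
    exact h0.comp hm
  have h4 : Tendsto (fun K : ℕ => Real.log (Real.log K + C2) / Real.log K) atTop (nhds 0) := by
    have := hlogm.mul hmL
    rw [mul_one] at this
    refine this.congr' ?_
    filter_upwards [hm.eventually_gt_atTop 0, hL.eventually_gt_atTop 0] with K h1 h2
    field_simp
  -- g / log K → 1
  have hgL : Tendsto (fun K => g K / Real.log K) atTop (nhds 1) := by
    have hlim : Tendsto (fun K : ℕ => 1 + C1 / Real.log K
        + (1 / 2) * (Real.log (Real.log K + C2) / Real.log K)) atTop (nhds 1) := by
      have t1 : Tendsto (fun K : ℕ => C1 / Real.log K) atTop (nhds 0) :=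
        tendsto_const_nhds.div_atTop hL
      have := (t1.const_add 1).add (h4.const_mul (1 / 2))
      simpa using this
    refine hlim.congr' ?_
    filter_upwards [heq1, heq2, hL.eventually_gt_atTop 0] with K e1 e2 h3
    rw [hg]
    simp only [e1, e2]
    field_simp
  have hgtop : Tendsto g atTop atTop := aux_atTop one_pos hL hgL
  -- u₁ := (λ/2)(log K + C2) satisfies u₁ / g² → 0
  have hmg : Tendsto (fun K : ℕ => (Real.log K + C2) / g K) atTop (nhds 1) := by
    have hinv : Tendsto (fun K : ℕ => Real.log K / g K) atTop (nhds 1) := by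
      have := hgL.inv₀ one_ne_zero
      simp only [inv_one] at this
      refine this.congr' ?_
      filter_upwards [hL.eventually_gt_atTop 0] with K h1
      rw [inv_div]
    have := hmL.mul hinv
    rw [mul_one] at this
    refine this.congr' ?_
    filter_upwards [hL.eventually_gt_atTop 0] with K h1
    field_simp
  have hu1 : Tendsto (fun K : ℕ => (lam / 2) * Real.log ((K:ℝ) * Real.sqrt Real.pi
      * lam ^ (-(1/4) : ℝ)) / (g K) ^ 2) atTop (nhds 0) := by
    have h5 : Tendsto (fun K : ℕ => (lam / 2) * (((Real.log K + C2) / g K) * (g K)⁻¹))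
        atTop (nhds 0) := by
      have := (hmg.mul hgtop.inv_tendsto_atTop).const_mul (lam / 2)
      simpa using this
    refine h5.congr' ?_
    filter_upwards [heq2, hgtop.eventually_gt_atTop 0] with K e2 h1
    rw [e2]
    have hg0 : g K ≠ 0 := h1.ne'
    rw [pow_two, mul_div_assoc (lam / 2)]
    congr 1
    rw [← div_eq_mul_inv, div_div]
  have hu2 : Tendsto (fun K : ℕ => (0:ℝ) / (g K) ^ 2) atTop (nhds 0) := by
    simpa using (tendsto_const_nhds : Tendsto (fun _ : ℕ => (0:ℝ)) atTop _)
  -- apply the main lemma twice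
  have t1 := aux_main hlam hc hgL hu1
  have t2' := aux_main hlam hc hgL hu2
  have t2 : Tendsto (fun K => Real.log (1 + c * ((lam / 4) * (g K) ^ 2))
      / Real.log (Real.log K)) atTop (nhds 2) := by
    refine t2'.congr (fun K => by rw [add_zero])
  -- assemble
  have hfinal := (t1.const_mul (e0 / (N * Real.log 2))).add
    (t2.const_mul ((1 - e0) / (N * Real.log 2)))
  have hval : e0 / (N * Real.log 2) * 2 + (1 - e0) / (N * Real.log 2) * 2
      = 2 / (N * Real.log 2) := by
    have hlog2 : Real.log 2 ≠ 0 := ne_of_gt (Real.log_pos one_lt_two)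
    field_simp
    ring
  rw [hval] at hfinal
  refine hfinal.congr (fun K => ?_)
  simp only [Real.logb, hg]
  ring
end
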